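/- Let n be a finite-dimensional real Lie algebra and let D₁, D₂ ∈ δ⁺(n). Then the expanded Lie algebras n(D₁) and n(D₂) are isomorphic as Lie algebras if and only if there exist g ∈ Aut(n), X ∈ n and a real number λ ≠ 0 such that D₁ = g⁻¹ ∘ ad(X) ∘ g + λ · g⁻¹ ∘ D₂ ∘ g. -/

import Mathlib

open Module

/-- `D` is a derivation of the real Lie algebra `L`. -/
def IsLieDeriv {L : Type*} [LieRing L] [LieAlgebra ℝ L] (D : Module.End ℝ L) : Prop :=
  ∀ x y : L, D ⁅x, y⁆ = ⁅D x, y⁆ + ⁅x, D y⁆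

/-- All eigenvalues (complex roots of the characteristic polynomial) of `f` have
positive real part; i.e. `f ∈ δ⁺` when `f` is a derivation. -/
def PosSpec {V : Type*} [AddCommGroup V] [Module ℝ V] [Module.Finite ℝ V]
    (f : Module.End ℝ V) : Prop :=
  ∀ z ∈ ((LinearMap.charpoly f).map (algebraMap ℝ ℂ)).roots, 0 < z.re

/-- The bracket of the expanded Lie algebra `n(D) = n ⊕ ℝ`, where `A_D = (0,1)`. -/
def expBracket {L : Type*} [LieRing L] [LieAlgebra ℝ L] (D : Module.End ℝ L)
    (p q : L × ℝ) : L × ℝ :=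
  (⁅p.1, q.1⁆ + p.2 • D q.1 - q.2 • D p.1, 0)

/-- The expanded Lie algebras `n(D₁)` and `n(D₂)` are isomorphic as Lie algebras:
there is a linear equivalence of `n ⊕ ℝ` carrying one bracket to the other. -/
def ExpIso {L : Type*} [LieRing L] [LieAlgebra ℝ L] (D₁ D₂ : Module.End ℝ L) : Prop :=
  ∃ e : (L × ℝ) ≃ₗ[ℝ] (L × ℝ), ∀ p q, e (expBracket D₁ p q) = expBracket D₂ (e p) (e q)

lemma posSpec_surjective {V : Type*} [AddCommGroup V] [Module ℝ V] [Module.Finite ℝ V]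
    (f : Module.End ℝ V) (hp : PosSpec f) : Function.Surjective f := by
  have hinj : Function.Injective f := by
    by_contra hk
    rw [← LinearMap.ker_eq_bot] at hk
    have h0 : Module.End.HasEigenvalue f 0 := by
      rw [Module.End.hasEigenvalue_iff, Module.End.eigenspace_zero]
      exact hk
    have hroot : (minpoly ℝ f).IsRoot 0 := Module.End.hasEigenvalue_iff_isRoot.mp h0
    obtain ⟨c, hc⟩ := LinearMap.minpoly_dvd_charpoly f
    have hr2 : (LinearMap.charpoly f).IsRoot 0 := by
      rw [hc]
      simp [Polynomial.IsRoot, Polynomial.eval_mul, Polynomial.IsRoot.def.mp hroot]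
    have hmem : (0:ℂ) ∈ ((LinearMap.charpoly f).map (algebraMap ℝ ℂ)).roots := by
      rw [Polynomial.mem_roots ((f.charpoly_monic.map (algebraMap ℝ ℂ)).ne_zero)]
      have h0 : (LinearMap.charpoly f).coeff 0 = 0 := by
        rw [Polynomial.coeff_zero_eq_eval_zero]; exact Polynomial.IsRoot.def.mp hr2
      simp [Polynomial.IsRoot, Polynomial.eval_map, Polynomial.eval₂_at_zero, h0]
    simpa using hp 0 hmem
  exact LinearMap.injective_iff_surjective.mp hinj


lemma lieEquiv_map_add {L : Type*} [LieRing L] [LieAlgebra ℝ L] (g : L ≃ₗ⁅ℝ⁆ L)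
    (a b : L) : g (a + b) = g a + g b := by
  rw [← LieEquiv.coe_toLinearEquiv]; exact map_add _ _ _

lemma lieEquiv_map_sub {L : Type*} [LieRing L] [LieAlgebra ℝ L] (g : L ≃ₗ⁅ℝ⁆ L)
    (a b : L) : g (a - b) = g a - g b := by
  rw [← LieEquiv.coe_toLinearEquiv]; exact map_sub _ _ _

lemma lieEquiv_map_smul {L : Type*} [LieRing L] [LieAlgebra ℝ L] (g : L ≃ₗ⁅ℝ⁆ L)
    (c : ℝ) (a : L) : g (c • a) = c • g a := by
  rw [← LieEquiv.coe_toLinearEquiv]; exact map_smul _ _ _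

theorem stmt1 {n : Type*} [LieRing n] [LieAlgebra ℝ n] [Module.Finite ℝ n]
    (D₁ D₂ : Module.End ℝ n) (h₁ : IsLieDeriv D₁) (h₂ : IsLieDeriv D₂)
    (hp₁ : PosSpec D₁) (hp₂ : PosSpec D₂) :
    ExpIso D₁ D₂ ↔
      ∃ (g : n ≃ₗ⁅ℝ⁆ n) (X : n) (lam : ℝ), lam ≠ 0 ∧
        ∀ y : n, D₁ y = g.symm ⁅X, g y⁆ + lam • g.symm (D₂ (g y)) := by
  constructor
  · rintro ⟨e, he⟩
    have hsurj₁ : Function.Surjective D₁ := posSpec_surjective _ hp₁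
    have hsurj₂ : Function.Surjective D₂ := posSpec_surjective _ hp₂
    have he' : ∀ p q, e.symm (expBracket D₂ p q) = expBracket D₁ (e.symm p) (e.symm q) := by
      intro p q
      apply e.injective
      rw [he, e.apply_symm_apply, e.apply_symm_apply, e.apply_symm_apply]
    have hsnd : ∀ Y : n, (e (Y, 0)).2 = 0 := by
      intro Y
      obtain ⟨Z, hZ⟩ := hsurj₁ Y
      have hYZ : ((Y, (0:ℝ)) : n × ℝ) = expBracket D₁ (0, 1) (Z, 0) := by
        simp [expBracket, hZ]
      rw [hYZ, he]; rfl
    have hsnd' : ∀ Y : n, (e.symm (Y, 0)).2 = 0 := by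
      intro Y
      obtain ⟨Z, hZ⟩ := hsurj₂ Y
      have hYZ : ((Y, (0:ℝ)) : n × ℝ) = expBracket D₂ (0, 1) (Z, 0) := by
        simp [expBracket, hZ]
      rw [hYZ, he']; rfl
    set glin : n →ₗ[ℝ] n :=
      (LinearMap.fst ℝ n ℝ) ∘ₗ e.toLinearMap ∘ₗ (LinearMap.inl ℝ n ℝ) with hglin
    set ginv : n →ₗ[ℝ] n :=
      (LinearMap.fst ℝ n ℝ) ∘ₗ e.symm.toLinearMap ∘ₗ (LinearMap.inl ℝ n ℝ) with hginv
    have hgl : ∀ Y : n, e (Y, 0) = (glin Y, 0) := fun Y =>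
      Prod.ext rfl (hsnd Y)
    have hgl' : ∀ Y : n, e.symm (Y, 0) = (ginv Y, 0) := fun Y =>
      Prod.ext rfl (hsnd' Y)
    have hleft : ∀ Y : n, ginv (glin Y) = Y := by
      intro Y
      have : e.symm (glin Y, 0) = (Y, 0) := by rw [← hgl, e.symm_apply_apply]
      rw [hgl'] at this
      exact congrArg Prod.fst this
    have hright : ∀ Y : n, glin (ginv Y) = Y := by
      intro Y
      have : e (ginv Y, 0) = (Y, 0) := by rw [← hgl', e.apply_symm_apply]
      rw [hgl] at this
      exact congrArg Prod.fst this
    have hmaplie : ∀ Y Z : n, glin ⁅Y, Z⁆ = ⁅glin Y, glin Z⁆ := by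
      intro Y Z
      have h5 : ((⁅Y, Z⁆, (0:ℝ)) : n × ℝ) = expBracket D₁ (Y, 0) (Z, 0) := by
        simp [expBracket]
      have h6 := congrArg e h5
      rw [hgl, he, hgl, hgl] at h6
      have h7 : expBracket D₂ ((glin Y, 0) : n × ℝ) (glin Z, 0) = (⁅glin Y, glin Z⁆, 0) := by
        simp [expBracket]
      rw [h7] at h6
      exact congrArg Prod.fst h6
    let g : n ≃ₗ⁅ℝ⁆ n :=
      { toLinearMap := glin
        map_lie' := fun {x y} => hmaplie x y
        invFun := ginv
        left_inv := hleft
        right_inv := hright }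
    refine ⟨g, (e (0, 1)).1, (e (0, 1)).2, ?_, ?_⟩
    · intro hl0
      have h8 : e (0, 1) = ((e (0, 1)).1, (0:ℝ)) := Prod.ext rfl hl0
      have h9 : e.symm ((e (0, 1)).1, (0:ℝ)) = (0, 1) := by
        rw [← h8, e.symm_apply_apply]
      rw [hgl'] at h9
      exact one_ne_zero (congrArg Prod.snd h9).symm
    · intro y
      have h5 : ((D₁ y, (0:ℝ)) : n × ℝ) = expBracket D₁ (0, 1) (y, 0) := by
        simp [expBracket]
      have h6 := congrArg e h5
      rw [hgl, he, hgl] at h6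
      have h7 : expBracket D₂ (e (0, 1)) ((glin y, 0) : n × ℝ)
          = (⁅(e (0,1)).1, glin y⁆ + (e (0,1)).2 • D₂ (glin y), 0) := by
        simp [expBracket]
      rw [h7] at h6
      have h8 : glin (D₁ y) = ⁅(e (0,1)).1, glin y⁆ + (e (0,1)).2 • D₂ (glin y) :=
        congrArg Prod.fst h6
      have h9 := congrArg g.symm h8
      rw [lieEquiv_map_add, lieEquiv_map_smul] at h9
      have h10 : g.symm (glin (D₁ y)) = D₁ y := hleft _
      rw [h10] at h9
      exact h9
  · rintro ⟨g, X, lam, hlam, hid⟩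
    have key : ∀ y : n, g (D₁ y) = ⁅X, g y⁆ + lam • D₂ (g y) := by
      intro y
      rw [hid y, lieEquiv_map_add, lieEquiv_map_smul, LieEquiv.apply_symm_apply, LieEquiv.apply_symm_apply]
    refine ⟨{ toFun := fun p => (g p.1 + p.2 • X, lam * p.2)
              map_add' := by
                intro p q
                simp only [Prod.fst_add, Prod.snd_add, lieEquiv_map_add, Prod.mk_add_mk]
                exact Prod.ext (by module) (by ring)
              map_smul' := by
                intro c p
                simp only [Prod.smul_fst, Prod.smul_snd, lieEquiv_map_smul, RingHom.id_apply,
                  Prod.smul_mk, smul_eq_mul]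
                exact Prod.ext (by module) (by ring)
              invFun := fun q => (g.symm (q.1 - (lam⁻¹ * q.2) • X), lam⁻¹ * q.2)
              left_inv := by
                intro p
                have : lam⁻¹ * (lam * p.2) = p.2 := by field_simp
                simp [this]
              right_inv := by
                intro q
                have : lam * (lam⁻¹ * q.2) = q.2 := by field_simp
                simp [this] }, ?_⟩
    rintro ⟨Y, s⟩ ⟨Z, t⟩
    simp only [expBracket, LinearEquiv.coe_mk, LinearMap.coe_mk, AddHom.coe_mk,
      mul_zero, Prod.mk.injEq, and_true]
    have e1 : g (⁅Y, Z⁆ + s • D₁ Z - t • D₁ Y)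
        = ⁅g Y, g Z⁆ + s • (⁅X, g Z⁆ + lam • D₂ (g Z)) - t • (⁅X, g Y⁆ + lam • D₂ (g Y)) := by
      rw [lieEquiv_map_sub, lieEquiv_map_add, lieEquiv_map_smul, lieEquiv_map_smul,
        LieEquiv.map_lie, key, key]
    rw [e1]
    have e2 : ⁅g Y, X⁆ = -⁅X, g Y⁆ := (lie_skew (g Y) X).symm ▸ rfl
    simp only [lie_add, add_lie, smul_lie, lie_smul, lie_self, map_add, map_smul,
      smul_zero, smul_add, smul_sub, smul_neg, e2]
    module
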